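/- For every α ∈ R there exist ℓ ∈ ℕ, digits c_0, …, c_{ℓ−1} ∈ D with at least one of c_i, c_{i+1}, c_{i+2}, c_{i+3} equal to 0 for every i with 0 ≤ i ≤ ℓ−4, and an element β ∈ R with Q(β) ≤ 38, such that α = Σ_{i=0}^{ℓ−1} c_i·τ^i + τ^ℓ·β in R. -/

import Mathlib

open Polynomial

noncomputable def P (μ : ℤ) : ℤ[X] := X ^ 4 - C μ * X ^ 3 - C (2 * μ) * X + 4

noncomputable abbrev Rg (μ : ℤ) := AdjoinRoot (P μ)

noncomputable def tau (μ : ℤ) : Rg μ := AdjoinRoot.root (P μ)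

noncomputable def Q (μ : ℤ) (α : Rg μ) : ℝ :=
  (1 / 2) * (((P μ).map (Int.castRingHom ℂ)).roots.attach.map
    (fun z => ‖AdjoinRoot.lift (Int.castRingHom ℂ) z.1
      (by
        have h2 : Polynomial.eval z.1 ((P μ).map (Int.castRingHom ℂ)) = 0 :=
          (Polynomial.mem_roots'.mp z.2).2
        rwa [Polynomial.eval_map] at h2) α‖ ^ 2)).sum

lemma P_monic (μ : ℤ) : (P μ).Monic := by
  unfold P; monicity!

lemma P_natDegree (μ : ℤ) : (P μ).natDegree = 4 := by
  unfold P; compute_degree!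

lemma tau_pow (μ : ℤ) : tau μ ^ 4 = μ * tau μ ^ 3 + 2 * μ * tau μ - 4 := by
  have h : aeval (tau μ) (P μ) = 0 := by
    rw [show tau μ = AdjoinRoot.root (P μ) from rfl, AdjoinRoot.aeval_eq, AdjoinRoot.mk_self]
  have h2 : aeval (tau μ) (X ^ 4 - C μ * X ^ 3 - C (2 * μ) * X + 4 : ℤ[X]) = 0 := h
  simp only [map_add, map_sub, map_mul, map_pow, aeval_X, aeval_C, map_ofNat,
    algebraMap_int_eq, eq_intCast, Int.cast_mul, Int.cast_ofNat, map_intCast] at h2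
  push_cast at h2
  linear_combination h2

noncomputable def el (μ a0 a1 a2 a3 : ℤ) : Rg μ :=
  (a0 : Rg μ) + a1 * tau μ + a2 * tau μ ^ 2 + a3 * tau μ ^ 3

lemma el_surj (μ : ℤ) (α : Rg μ) : ∃ a0 a1 a2 a3, α = el μ a0 a1 a2 a3 := by
  obtain ⟨f, rfl⟩ := AdjoinRoot.mk_surjective α
  set r := f %ₘ P μ with hr
  have hmk : AdjoinRoot.mk (P μ) f = AdjoinRoot.mk (P μ) r := by
    conv_lhs => rw [← Polynomial.modByMonic_add_div f (P μ)]
    rw [map_add, map_mul, AdjoinRoot.mk_self, zero_mul, add_zero]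
  refine ⟨r.coeff 0, r.coeff 1, r.coeff 2, r.coeff 3, ?_⟩
  rw [hmk, ← AdjoinRoot.aeval_eq]
  have hdeg : r.natDegree < 4 := by
    rcases eq_or_ne r 0 with h0 | h0
    · simp [h0]
    · have h1 : r.degree < (P μ).degree := Polynomial.degree_modByMonic_lt f (P_monic μ)
      have h2 : (P μ).degree = 4 := by
        rw [Polynomial.degree_eq_natDegree (P_monic μ).ne_zero, P_natDegree]; rfl
      rw [h2] at h1
      exact (Polynomial.natDegree_lt_iff_degree_lt h0).mpr h1
  rw [Polynomial.aeval_eq_sum_range' hdeg]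
  simp only [Finset.sum_range_succ, Finset.sum_range_zero, zsmul_eq_mul, el, tau]
  push_cast
  ring

lemma step (μ a0 a1 a2 a3 c k : ℤ) (h : a0 = c + 4 * k) :
    el μ a0 a1 a2 a3 = c + tau μ * el μ (a1 + 2*μ*k) a2 (a3 + μ*k) (-k) := by
  have hp := tau_pow μ
  have hc : (a0 : Rg μ) = (c : Rg μ) + 4 * k := by exact_mod_cast congrArg (Int.cast : ℤ → Rg μ) h
  simp only [el]
  push_cast
  linear_combination hc + (k : Rg μ) * hp

lemma digit_parity (a0 t : ℤ) (h : ¬ (4 ∣ a0)) :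
    ∃ c k, -3 ≤ c ∧ c ≤ 3 ∧ a0 = c + 4 * k ∧ k % 2 = t % 2 := by
  by_cases hq : (a0 / 4) % 2 = t % 2
  · exact ⟨a0 % 4, a0 / 4, by omega, by omega, by omega, by omega⟩
  · exact ⟨a0 % 4 - 4, a0 / 4 + 1, by omega, by omega, by omega, by omega⟩

lemma digit_any (a0 : ℤ) : ∃ c k, -3 ≤ c ∧ c ≤ 3 ∧ a0 = c + 4 * k :=
  ⟨a0 % 4, a0 / 4, by omega, by omega, by omega⟩

noncomputable def s17 : ℝ := Real.sqrt 17
noncomputable def ga (μ : ℤ) (j : Bool) : ℝ := (-(μ:ℝ) + (if j then s17 else -s17)) / 2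
noncomputable def gu (μ : ℤ) (j : Bool) : ℝ := Real.sqrt (8 - ga μ j ^ 2)
noncomputable def gw (μ : ℤ) (j e : Bool) : ℂ :=
  ⟨-(ga μ j) / 2, (if e then gu μ j else -gu μ j) / 2⟩

lemma s17_sq : s17 ^ 2 = 17 := Real.sq_sqrt (by norm_num)
lemma s17_nonneg : 0 ≤ s17 := Real.sqrt_nonneg _
lemma s17_le : s17 ≤ 4.2 := by nlinarith [s17_sq, s17_nonneg]

lemma ga_sq_le (μ : ℤ) (hμ : μ = 1 ∨ μ = -1) (j : Bool) : ga μ j ^ 2 ≤ 8 := by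
  have h1 := s17_sq; have h2 := s17_nonneg; have h3 := s17_le
  rcases hμ with rfl | rfl <;> rcases j <;> simp only [ga] <;> push_cast <;> nlinarith

lemma gu_sq (μ : ℤ) (hμ : μ = 1 ∨ μ = -1) (j : Bool) : gu μ j ^ 2 = 8 - ga μ j ^ 2 :=
  Real.sq_sqrt (by linarith [ga_sq_le μ hμ j])

lemma ga_sum (μ : ℤ) : ga μ true + ga μ false = -(μ:ℝ) := by simp [ga]; ring

lemma ga_prod (μ : ℤ) (hμ : μ = 1 ∨ μ = -1) : ga μ true * ga μ false = -4 := by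
  have h1 := s17_sq
  rcases hμ with rfl | rfl <;> simp [ga] <;> push_cast <;> nlinarith

lemma quad_fact (μ : ℤ) (hμ : μ = 1 ∨ μ = -1) (j : Bool) :
    (X - Polynomial.C (gw μ j true)) * (X - Polynomial.C (gw μ j false)) =
      X ^ 2 + Polynomial.C ((ga μ j : ℂ)) * X + Polynomial.C 2 := by
  have hadd : gw μ j true + gw μ j false = ((-(ga μ j) : ℝ) : ℂ) := by
    apply Complex.ext <;> simp [gw] <;> ring
  have hmul : gw μ j true * gw μ j false = ((2 : ℝ) : ℂ) := by
    apply Complex.ext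
    · simp [gw, Complex.mul_re]
      have := gu_sq μ hμ j
      nlinarith [gu_sq μ hμ j]
    · simp [gw, Complex.mul_im]
      ring
  have expand : (X - Polynomial.C (gw μ j true)) * (X - Polynomial.C (gw μ j false)) =
      X ^ 2 - Polynomial.C (gw μ j true + gw μ j false) * X
        + Polynomial.C (gw μ j true * gw μ j false) := by
    simp only [Polynomial.C_add, Polynomial.C_mul]; ring
  rw [expand, hadd, hmul]
  simp only [Complex.ofReal_neg, map_neg, Complex.ofReal_ofNat]
  ring

lemma quartic_fact (μ : ℤ) (hμ : μ = 1 ∨ μ = -1) :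
    (P μ).map (Int.castRingHom ℂ) =
      (X ^ 2 + Polynomial.C ((ga μ true : ℂ)) * X + Polynomial.C 2) *
      (X ^ 2 + Polynomial.C ((ga μ false : ℂ)) * X + Polynomial.C 2) := by
  have h1 : ((ga μ true : ℂ)) + ((ga μ false : ℂ)) = -(μ : ℂ) := by
    rw [← Complex.ofReal_add, ga_sum]
    push_cast; ring
  have h2 : ((ga μ true : ℂ)) * ((ga μ false : ℂ)) = -4 := by
    rw [← Complex.ofReal_mul, ga_prod μ hμ]
    norm_num
  have hmap : (P μ).map (Int.castRingHom ℂ) =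
      X ^ 4 - Polynomial.C (μ : ℂ) * X ^ 3 - Polynomial.C (2 * (μ : ℂ)) * X + 4 := by
    simp only [P, Polynomial.map_add, Polynomial.map_sub, Polynomial.map_mul,
      Polynomial.map_pow, Polynomial.map_X, Polynomial.map_C, Polynomial.map_ofNat]
    norm_num [Polynomial.map_ofNat]
  have hC1 : Polynomial.C ((ga μ true : ℂ)) + Polynomial.C ((ga μ false : ℂ)) =
      -Polynomial.C ((μ : ℂ)) := by rw [← Polynomial.C_add, h1, map_neg]
  have hC2 : Polynomial.C ((ga μ true : ℂ)) * Polynomial.C ((ga μ false : ℂ)) =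
      (-4 : ℂ[X]) := by
    rw [← Polynomial.C_mul, h2, map_neg]; simp [map_ofNat]
  have hCmu : Polynomial.C (2 * (μ : ℂ)) = 2 * Polynomial.C ((μ:ℂ)) := by
    rw [Polynomial.C_mul]; simp [map_ofNat]
  rw [hmap, hCmu]
  simp only [map_ofNat]
  linear_combination (-(X:ℂ[X])^3 - 2*X) * hC1 + (-(X:ℂ[X])^2) * hC2

lemma roots_eq (μ : ℤ) (hμ : μ = 1 ∨ μ = -1) :
    ((P μ).map (Int.castRingHom ℂ)).roots =
      (gw μ true true ::ₘ gw μ true false ::ₘ gw μ false true ::ₘ {gw μ false false}) := by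
  have : (P μ).map (Int.castRingHom ℂ) =
      ((gw μ true true ::ₘ gw μ true false ::ₘ gw μ false true ::ₘ {gw μ false false}).map
        fun w => X - Polynomial.C w).prod := by
    simp only [Multiset.map_cons, Multiset.map_singleton, Multiset.prod_cons,
      Multiset.prod_singleton]
    rw [quartic_fact μ hμ, ← quad_fact μ hμ true, ← quad_fact μ hμ false]
    ring
  rw [this, Polynomial.roots_multiset_prod_X_sub_C]

lemma emb_proof (μ : ℤ) (hμ : μ = 1 ∨ μ = -1) (j e : Bool) :
    (P μ).eval₂ (Int.castRingHom ℂ) (gw μ j e) = 0 := by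
  have hmem : gw μ j e ∈ ((P μ).map (Int.castRingHom ℂ)).roots := by
    rw [roots_eq μ hμ]; rcases j <;> rcases e <;> simp
  have h := (Polynomial.mem_roots'.mp hmem).2
  rw [Polynomial.IsRoot, Polynomial.eval_map] at h
  exact h

noncomputable def emb (μ : ℤ) (hμ : μ = 1 ∨ μ = -1) (j e : Bool) : Rg μ →+* ℂ :=
  AdjoinRoot.lift (Int.castRingHom ℂ) (gw μ j e) (emb_proof μ hμ j e)

lemma Q_eq (μ : ℤ) (hμ : μ = 1 ∨ μ = -1) (α : Rg μ) :
    Q μ α = 1/2 * (‖emb μ hμ true true α‖^2 + ‖emb μ hμ true false α‖^2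
      + ‖emb μ hμ false true α‖^2 + ‖emb μ hμ false false α‖^2) := by
  obtain ⟨g, rfl⟩ := AdjoinRoot.mk_surjective α
  unfold Q
  simp only [AdjoinRoot.lift_mk]
  rw [Multiset.attach_map_val' _ (fun w => ‖Polynomial.eval₂ (Int.castRingHom ℂ) w g‖ ^ 2)]
  rw [roots_eq μ hμ]
  simp only [emb, AdjoinRoot.lift_mk, Multiset.map_cons, Multiset.sum_cons,
    Multiset.map_singleton, Multiset.sum_singleton]
  ring

lemma gw_normsq (μ : ℤ) (hμ : μ = 1 ∨ μ = -1) (j e : Bool) : ‖gw μ j e‖ ^ 2 = 2 := by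
  rw [Complex.sq_norm]
  rcases e <;> simp [gw, Complex.normSq_mk] <;> nlinarith [gu_sq μ hμ j]

lemma emb_tau (μ : ℤ) (hμ : μ = 1 ∨ μ = -1) (j e : Bool) :
    emb μ hμ j e (tau μ) = gw μ j e := AdjoinRoot.lift_root _

lemma Qmul_tau (μ : ℤ) (hμ : μ = 1 ∨ μ = -1) (β : Rg μ) :
    Q μ (tau μ * β) = 2 * Q μ β := by
  rw [Q_eq μ hμ, Q_eq μ hμ]
  have e1 : ∀ j e, ‖emb μ hμ j e (tau μ * β)‖ ^ 2 = 2 * ‖emb μ hμ j e β‖ ^ 2 := by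
    intro j e
    rw [map_mul, norm_mul, mul_pow, emb_tau μ hμ j e, gw_normsq μ hμ j e]
  rw [e1, e1, e1, e1]; ring

lemma Qpow_mul (μ : ℤ) (hμ : μ = 1 ∨ μ = -1) (L : ℕ) (β : Rg μ) :
    Q μ (tau μ ^ L * β) = 2 ^ L * Q μ β := by
  induction L generalizing β with
  | zero => simp
  | succ n ih =>
    have h : tau μ ^ (n + 1) * β = tau μ ^ n * (tau μ * β) := by ring
    rw [h, ih, Qmul_tau μ hμ]
    ring

lemma Qsub2 (μ : ℤ) (hμ : μ = 1 ∨ μ = -1) (x y : Rg μ) :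
    Q μ (x - y) ≤ 2 * Q μ x + 2 * Q μ y := by
  have key : ∀ u v : ℂ, ‖u - v‖ ^ 2 ≤ 2 * ‖u‖ ^ 2 + 2 * ‖v‖ ^ 2 := by
    intro u v
    nlinarith [norm_sub_le u v, norm_nonneg u, norm_nonneg v, norm_nonneg (u - v),
      sq_nonneg (‖u‖ - ‖v‖)]
  rw [Q_eq μ hμ, Q_eq μ hμ, Q_eq μ hμ]
  simp only [map_sub]
  have k1 := key (emb μ hμ true true x) (emb μ hμ true true y)
  have k2 := key (emb μ hμ true false x) (emb μ hμ true false y)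
  have k3 := key (emb μ hμ false true x) (emb μ hμ false true y)
  have k4 := key (emb μ hμ false false x) (emb μ hμ false false y)
  linarith

lemma Qnonneg (μ : ℤ) (hμ : μ = 1 ∨ μ = -1) (x : Rg μ) : 0 ≤ Q μ x := by
  rw [Q_eq μ hμ]
  positivity

lemma hnorm_quad (x y : ℝ) (d0 d1 d2 : ℤ) :
    ‖(d0 : ℂ) + (d1 : ℂ) * (⟨x, y⟩ : ℂ) + (d2 : ℂ) * (⟨x, y⟩ : ℂ) ^ 2‖ ^ 2
      = ((d0:ℝ) + (d1:ℝ) * x + (d2:ℝ) * (x^2 - y^2))^2 + ((d1:ℝ)*y + 2*(d2:ℝ)*(x*y))^2 := by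
  rw [Complex.sq_norm]
  have hre : ((d0 : ℂ) + (d1 : ℂ) * (⟨x, y⟩ : ℂ) + (d2 : ℂ) * (⟨x, y⟩ : ℂ) ^ 2) =
      (⟨(d0:ℝ) + (d1:ℝ)*x + (d2:ℝ)*(x^2 - y^2), (d1:ℝ)*y + 2*(d2:ℝ)*(x*y)⟩ : ℂ) := by
    apply Complex.ext <;>
      simp [pow_two, Complex.mul_re, Complex.mul_im, Complex.add_re, Complex.add_im] <;>
      ring
  rw [hre, Complex.normSq_mk]; ring

lemma Qform (μ : ℤ) (hμ : μ = 1 ∨ μ = -1) (c0 c1 c2 : ℤ) :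
    Q μ ((c0 : Rg μ) + (c1 : Rg μ) * tau μ + (c2 : Rg μ) * tau μ ^ 2)
      = 2*(c0:ℝ)^2 + 4*(c1:ℝ)^2 + 8*(c2:ℝ)^2 + (μ:ℝ)*(c0:ℝ)*(c1:ℝ)
        + (c0:ℝ)*(c2:ℝ) + 2*(μ:ℝ)*(c1:ℝ)*(c2:ℝ) := by
  rw [Q_eq μ hμ]
  have hval : ∀ j e, emb μ hμ j e ((c0 : Rg μ) + (c1 : Rg μ) * tau μ + (c2 : Rg μ) * tau μ ^ 2)
      = (c0 : ℂ) + (c1 : ℂ) * gw μ j e + (c2 : ℂ) * gw μ j e ^ 2 := by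
    intro j e
    simp only [map_add, map_mul, map_pow, map_intCast, emb_tau μ hμ j e]
  rw [hval, hval, hval, hval]
  have g1 : gw μ true true = (⟨-(ga μ true)/2, (gu μ true)/2⟩ : ℂ) := by simp [gw]
  have g2 : gw μ true false = (⟨-(ga μ true)/2, -(gu μ true)/2⟩ : ℂ) := by simp [gw]
  have g3 : gw μ false true = (⟨-(ga μ false)/2, (gu μ false)/2⟩ : ℂ) := by simp [gw]
  have g4 : gw μ false false = (⟨-(ga μ false)/2, -(gu μ false)/2⟩ : ℂ) := by simp [gw]
  rw [g1, g2, g3, g4, hnorm_quad, hnorm_quad, hnorm_quad, hnorm_quad]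
  have hm : (μ:ℝ)^2 = 1 := by rcases hμ with rfl | rfl <;> norm_num
  have hu1 := gu_sq μ hμ true
  have hu2 := gu_sq μ hμ false
  have hsum := ga_sum μ
  have hprod := ga_prod μ hμ
  set A := ga μ true
  set B := ga μ false
  set U := gu μ true
  set V := gu μ false
  linear_combination
    ((1/2)*(c2:ℝ)^2 + (1/4)*(c1:ℝ)^2 - (1/2)*(c0:ℝ)*(c2:ℝ) + (1/16)*U^2*(c2:ℝ)^2
      - (1/4)*A*(c1:ℝ)*(c2:ℝ) + (1/16)*A^2*(c2:ℝ)^2) * hu1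
    + ((1/2)*(c2:ℝ)^2 + (1/4)*(c1:ℝ)^2 - (1/2)*(c0:ℝ)*(c2:ℝ) + (1/16)*V^2*(c2:ℝ)^2
      - (1/4)*B*(c1:ℝ)*(c2:ℝ) + (1/16)*B^2*(c2:ℝ)^2) * hu2
    + (-2*(c1:ℝ)*(c2:ℝ) - (c0:ℝ)*(c1:ℝ) - (μ:ℝ)*(c0:ℝ)*(c2:ℝ) + B*(c0:ℝ)*(c2:ℝ)
      + A*(c0:ℝ)*(c2:ℝ)) * hsum
    + (-2*(c0:ℝ)*(c2:ℝ)) * hprod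
    + ((c0:ℝ)*(c2:ℝ)) * hm

lemma block (μ : ℤ) (hμ : μ = 1 ∨ μ = -1) (a0 a1 a2 a3 : ℤ) :
    ∃ (L : ℕ) (c0 c1 c2 b0 b1 b2 b3 : ℤ),
      1 ≤ L ∧ L ≤ 4 ∧
      (-3 ≤ c0 ∧ c0 ≤ 3) ∧ (-3 ≤ c1 ∧ c1 ≤ 3) ∧ (-3 ≤ c2 ∧ c2 ≤ 3) ∧
      (L = 1 → c0 = 0) ∧ (L ≤ 2 → c1 = 0) ∧ (L ≤ 3 → c2 = 0) ∧
      el μ a0 a1 a2 a3 =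
        ((c0 : Rg μ) + (c1 : Rg μ) * tau μ + (c2 : Rg μ) * tau μ ^ 2)
          + tau μ ^ L * el μ b0 b1 b2 b3 := by
  by_cases h0 : 4 ∣ a0
  · -- L = 1
    have s1 := step μ a0 a1 a2 a3 0 (a0/4) (by omega)
    refine ⟨1, 0, 0, 0, a1 + 2*μ*(a0/4), a2, a3 + μ*(a0/4), -(a0/4), le_refl 1, by omega,
      by omega, by omega, by omega, fun _ => rfl, fun _ => rfl, fun _ => rfl, ?_⟩
    rw [s1]; push_cast; ring
  · by_cases h1 : 2 ∣ a1
    · -- L = 2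
      obtain ⟨c, k, hcl, hcu, heq, hk⟩ := digit_parity a0 (a1 / 2) h0
      have s1 := step μ a0 a1 a2 a3 c k heq
      have h4 : 4 ∣ a1 + 2*μ*k := by rcases hμ with rfl | rfl <;> omega
      have s2 := step μ (a1 + 2*μ*k) a2 (a3 + μ*k) (-k) 0 ((a1 + 2*μ*k)/4) (by omega)
      refine ⟨2, c, 0, 0, a2 + 2*μ*((a1 + 2*μ*k)/4), a3 + μ*k, -k + μ*((a1 + 2*μ*k)/4),
        -((a1 + 2*μ*k)/4), by omega, by omega, ⟨hcl, hcu⟩, by omega, by omega,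
        by intro h; omega, fun _ => rfl, fun _ => rfl, ?_⟩
      rw [s1, s2]; push_cast; ring
    · by_cases h2 : 2 ∣ a2
      · -- L = 3
        obtain ⟨c, k, hcl, hcu, heq⟩ := digit_any a0
        have s1 := step μ a0 a1 a2 a3 c k heq
        have hn1 : ¬ (4 ∣ a1 + 2*μ*k) := by rcases hμ with rfl | rfl <;> omega
        obtain ⟨c', k', hcl', hcu', heq', hk'⟩ := digit_parity (a1 + 2*μ*k) (a2 / 2) hn1
        have s2 := step μ (a1 + 2*μ*k) a2 (a3 + μ*k) (-k) c' k' heq'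
        have h4 : 4 ∣ a2 + 2*μ*k' := by rcases hμ with rfl | rfl <;> omega
        have s3 := step μ (a2 + 2*μ*k') (a3 + μ*k) (-k + μ*k') (-k') 0 ((a2 + 2*μ*k')/4)
          (by omega)
        refine ⟨3, c, c', 0, a3 + μ*k + 2*μ*((a2 + 2*μ*k')/4), -k + μ*k',
          -k' + μ*((a2 + 2*μ*k')/4), -((a2 + 2*μ*k')/4), by omega, by omega, ⟨hcl, hcu⟩,
          ⟨hcl', hcu'⟩, by omega, by intro h; omega, by intro h; omega, fun _ => rfl, ?_⟩
        rw [s1, s2, s3]; push_cast; ring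
      · -- L = 4
        obtain ⟨c, k, hcl, hcu, heq, hk⟩ := digit_parity a0 a3 h0
        have s1 := step μ a0 a1 a2 a3 c k heq
        have hn1 : ¬ (4 ∣ a1 + 2*μ*k) := by rcases hμ with rfl | rfl <;> omega
        obtain ⟨c', k', hcl', hcu', heq'⟩ := digit_any (a1 + 2*μ*k)
        have s2 := step μ (a1 + 2*μ*k) a2 (a3 + μ*k) (-k) c' k' heq'
        have hn2 : ¬ (4 ∣ a2 + 2*μ*k') := by rcases hμ with rfl | rfl <;> omega
        obtain ⟨c'', k'', hcl'', hcu'', heq'', hk''⟩ :=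
          digit_parity (a2 + 2*μ*k') ((a3 + μ*k)/2) hn2
        have s3 := step μ (a2 + 2*μ*k') (a3 + μ*k) (-k + μ*k') (-k') c'' k'' heq''
        have h4 : 4 ∣ (a3 + μ*k) + 2*μ*k'' := by rcases hμ with rfl | rfl <;> omega
        have s4 := step μ ((a3 + μ*k) + 2*μ*k'') (-k + μ*k') (-k' + μ*k'') (-k'') 0
          (((a3 + μ*k) + 2*μ*k'')/4) (by omega)
        refine ⟨4, c, c', c'', -k + μ*k' + 2*μ*(((a3 + μ*k) + 2*μ*k'')/4), -k' + μ*k'',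
          -k'' + μ*(((a3 + μ*k) + 2*μ*k'')/4), -(((a3 + μ*k) + 2*μ*k'')/4), by omega, by omega,
          ⟨hcl, hcu⟩, ⟨hcl', hcu'⟩, ⟨hcl'', hcu''⟩, by intro h; omega, by intro h; omega,
          by intro h; omega, ?_⟩
        rw [s1, s2, s3, s4]; push_cast; ring

lemma form_bound1 (x : ℝ) (h1 : -3 ≤ x) (h2 : x ≤ 3) : 2*x^2 ≤ 18 := by nlinarith

lemma form_bound2 (m x y : ℝ) (hm : m = 1 ∨ m = -1) (hx1 : -3 ≤ x) (hx2 : x ≤ 3)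
    (hy1 : -3 ≤ y) (hy2 : y ≤ 3) : 2*x^2 + 4*y^2 + m*x*y ≤ 63 := by
  rcases hm with rfl | rfl <;>
    nlinarith [sq_nonneg (x - y), sq_nonneg (x + y), mul_nonneg (by linarith : (0:ℝ) ≤ 3 - x)
      (by linarith : (0:ℝ) ≤ x + 3), mul_nonneg (by linarith : (0:ℝ) ≤ 3 - y)
      (by linarith : (0:ℝ) ≤ y + 3)]

lemma form_bound3 (m x y z : ℝ) (hm : m = 1 ∨ m = -1) (hx1 : -3 ≤ x) (hx2 : x ≤ 3)
    (hy1 : -3 ≤ y) (hy2 : y ≤ 3) (hz1 : -3 ≤ z) (hz2 : z ≤ 3) :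
    2*x^2 + 4*y^2 + 8*z^2 + m*x*y + x*z + 2*m*y*z ≤ 162 := by
  rcases hm with rfl | rfl <;>
    nlinarith [sq_nonneg (x - y), sq_nonneg (x + y), sq_nonneg (x - z), sq_nonneg (x + z),
      sq_nonneg (y - z), sq_nonneg (y + z),
      mul_nonneg (by linarith : (0:ℝ) ≤ 3 - x) (by linarith : (0:ℝ) ≤ x + 3),
      mul_nonneg (by linarith : (0:ℝ) ≤ 3 - y) (by linarith : (0:ℝ) ≤ y + 3),
      mul_nonneg (by linarith : (0:ℝ) ≤ 3 - z) (by linarith : (0:ℝ) ≤ z + 3)]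

set_option maxHeartbeats 1000000 in
lemma descent (μ : ℤ) (hμ : μ = 1 ∨ μ = -1) (n : ℕ) :
    ∀ α : Rg μ, Q μ α ≤ n + 38 →
    ∃ (ℓ : ℕ) (c : ℕ → ℤ) (β : Rg μ),
      (∀ i < ℓ, -3 ≤ c i ∧ c i ≤ 3) ∧
      (∀ i, i + 3 < ℓ → c i = 0 ∨ c (i + 1) = 0 ∨ c (i + 2) = 0 ∨ c (i + 3) = 0) ∧
      Q μ β ≤ 38 ∧
      α = (∑ i ∈ Finset.range ℓ, (c i : Rg μ) * tau μ ^ i) + tau μ ^ ℓ * β := by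
  induction n with
  | zero =>
    intro α hα
    refine ⟨0, fun _ => 0, α, by omega, by omega, le_trans hα (by norm_num), by simp⟩
  | succ n ih =>
    intro α hα
    by_cases hq : Q μ α ≤ 38
    · exact ⟨0, fun _ => 0, α, by omega, by omega, hq, by simp⟩
    · obtain ⟨a0, a1, a2, a3, rfl⟩ := el_surj μ α
      obtain ⟨L, c0, c1, c2, b0, b1, b2, b3, hL1, hL4, hb0, hb1, hb2, hz1, hz2, hz3, heq⟩ :=
        block μ hμ a0 a1 a2 a3
      set α := el μ a0 a1 a2 a3 with hαdef
      set β' := el μ b0 b1 b2 b3 with hβ'def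
      set C : Rg μ := (c0 : Rg μ) + (c1 : Rg μ) * tau μ + (c2 : Rg μ) * tau μ ^ 2 with hC
      have hpow : Q μ (tau μ ^ L * β') = 2 ^ L * Q μ β' := Qpow_mul μ hμ L β'
      have hsub : tau μ ^ L * β' = α - C := by rw [heq]; ring
      have h2L : (2:ℝ) ^ L * Q μ β' ≤ 2 * Q μ α + 2 * Q μ C := by
        rw [← hpow, hsub]; exact Qsub2 μ hμ α C
      have hQC : Q μ C = 2*(c0:ℝ)^2 + 4*(c1:ℝ)^2 + 8*(c2:ℝ)^2 + (μ:ℝ)*(c0:ℝ)*(c1:ℝ)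
          + (c0:ℝ)*(c2:ℝ) + 2*(μ:ℝ)*(c1:ℝ)*(c2:ℝ) := Qform μ hμ c0 c1 c2
      have hα' : Q μ α ≤ (n:ℝ) + 39 := by push_cast at hα; linarith
      have hc0 : (-3:ℝ) ≤ (c0:ℝ) ∧ (c0:ℝ) ≤ 3 :=
        ⟨by exact_mod_cast hb0.1, by exact_mod_cast hb0.2⟩
      have hc1 : (-3:ℝ) ≤ (c1:ℝ) ∧ (c1:ℝ) ≤ 3 :=
        ⟨by exact_mod_cast hb1.1, by exact_mod_cast hb1.2⟩
      have hc2 : (-3:ℝ) ≤ (c2:ℝ) ∧ (c2:ℝ) ≤ 3 :=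
        ⟨by exact_mod_cast hb2.1, by exact_mod_cast hb2.2⟩
      have hμsq : (μ:ℝ) = 1 ∨ (μ:ℝ) = -1 := by
        rcases hμ with rfl | rfl <;> [left; right] <;> norm_num
      have hnn : (0:ℝ) ≤ (n:ℝ) := Nat.cast_nonneg n
      have hβ'bound : Q μ β' ≤ n + 38 := by
        interval_cases L
        · have h0 : c0 = 0 := hz1 rfl
          have h1 : c1 = 0 := hz2 (by omega)
          have h2 : c2 = 0 := hz3 (by omega)
          have hC0 : C = 0 := by rw [hC, h0, h1, h2]; push_cast; ring
          have hx : (2:ℝ)^1 * Q μ β' = Q μ α := by rw [← hpow, hsub, hC0, sub_zero]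
          norm_num at hx
          linarith
        · have h1 : c1 = 0 := hz2 (by omega)
          have h2 : c2 = 0 := hz3 (by omega)
          have hQC' : Q μ C ≤ 18 := by
            rw [hQC, h1, h2]; push_cast
            linarith [form_bound1 (c0:ℝ) hc0.1 hc0.2]
          norm_num at h2L
          linarith
        · have h2 : c2 = 0 := hz3 (by omega)
          have hQC' : Q μ C ≤ 63 := by
            rw [hQC, h2]; push_cast
            linarith [form_bound2 (μ:ℝ) (c0:ℝ) (c1:ℝ) hμsq hc0.1 hc0.2 hc1.1 hc1.2]
          norm_num at h2L
          linarith
        · have hQC' : Q μ C ≤ 162 := by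
            rw [hQC]
            rcases hμsq with h | h <;> rw [h] <;>
              nlinarith [mul_nonneg (by linarith [hc0.2] : (0:ℝ) ≤ 3 - (c0:ℝ))
                  (by linarith [hc0.1] : (0:ℝ) ≤ (c0:ℝ) + 3),
                mul_nonneg (by linarith [hc1.2] : (0:ℝ) ≤ 3 - (c1:ℝ))
                  (by linarith [hc1.1] : (0:ℝ) ≤ (c1:ℝ) + 3),
                mul_nonneg (by linarith [hc2.2] : (0:ℝ) ≤ 3 - (c2:ℝ))
                  (by linarith [hc2.1] : (0:ℝ) ≤ (c2:ℝ) + 3),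
                sq_nonneg ((c0:ℝ) - c1), sq_nonneg ((c0:ℝ) + c1),
                sq_nonneg ((c0:ℝ) - c2), sq_nonneg ((c0:ℝ) + c2),
                sq_nonneg ((c1:ℝ) - c2), sq_nonneg ((c1:ℝ) + c2)]
          norm_num at h2L
          linarith
      obtain ⟨ℓ', c', β, hdig', hwin', hQβ, hsum'⟩ := ih β' hβ'bound
      refine ⟨L + ℓ', fun i => if i < L then (if i = 0 then c0 else if i = 1 then c1 else
        if i = 2 then c2 else 0) else c' (i - L), β, ?_, ?_, hQβ, ?_⟩
      · intro i hi
        by_cases hiL : i < L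
        · simp only [hiL, if_true]
          split_ifs <;> omega
        · simp only [hiL, if_false]
          exact hdig' (i - L) (by omega)
      · intro i hi
        dsimp only
        by_cases hiL : i < L
        · have hLL : L - 1 < L := by omega
          have hLval : (if L - 1 < L then (if L - 1 = 0 then c0 else if L - 1 = 1 then c1 else
              if L - 1 = 2 then c2 else 0) else c' (L - 1 - L)) = 0 := by
            simp only [hLL, if_true]
            interval_cases L
            · simpa using hz1 rfl
            · simpa using hz2 (by omega)
            · simpa using hz3 (by omega)
            · simp
          rcases (by omega : L - 1 = i ∨ L - 1 = i + 1 ∨ L - 1 = i + 2 ∨ L - 1 = i + 3) with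
            h | h | h | h
          · exact Or.inl (by rw [← h]; exact hLval)
          · exact Or.inr (Or.inl (by rw [← h]; exact hLval))
          · exact Or.inr (Or.inr (Or.inl (by rw [← h]; exact hLval)))
          · exact Or.inr (Or.inr (Or.inr (by rw [← h]; exact hLval)))
        · have key : ∀ j, L ≤ j →
              (if j < L then (if j = 0 then c0 else if j = 1 then c1 else
                if j = 2 then c2 else 0) else c' (j - L)) = c' (j - L) := by
            intro j hj
            have : ¬ (j < L) := by omega
            simp only [this, if_false]
          rw [key i (by omega), key (i+1) (by omega), key (i+2) (by omega), key (i+3) (by omega)]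
          have h1 : i + 1 - L = (i - L) + 1 := by omega
          have h2 : i + 2 - L = (i - L) + 2 := by omega
          have h3 : i + 3 - L = (i - L) + 3 := by omega
          rw [h1, h2, h3]
          exact hwin' (i - L) (by omega)
      · rw [Finset.sum_range_add]
        dsimp only
        have e2 : (∑ i ∈ Finset.range ℓ',
            (((if L + i < L then (if L + i = 0 then c0 else if L + i = 1 then c1 else
              if L + i = 2 then c2 else 0) else c' (L + i - L)) : ℤ) : Rg μ) * tau μ ^ (L + i))
            = tau μ ^ L * (∑ i ∈ Finset.range ℓ', (c' i : Rg μ) * tau μ ^ i) := by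
          rw [Finset.mul_sum]
          apply Finset.sum_congr rfl
          intro i _
          have hni : ¬ (L + i < L) := by omega
          have hsi : L + i - L = i := by omega
          simp only [hni, if_false, hsi]
          rw [pow_add]; ring
        have e1 : (∑ i ∈ Finset.range L,
            (((if i < L then (if i = 0 then c0 else if i = 1 then c1 else
              if i = 2 then c2 else 0) else c' (i - L)) : ℤ) : Rg μ) * tau μ ^ i) = C := by
          interval_cases L
          · have h0 : c0 = 0 := hz1 rfl
            have h1 : c1 = 0 := hz2 (by omega)
            have h2 : c2 = 0 := hz3 (by omega)
            simp [Finset.sum_range_succ, h0, h1, h2, hC]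
          · have h1 : c1 = 0 := hz2 (by omega)
            have h2 : c2 = 0 := hz3 (by omega)
            simp only [Finset.sum_range_succ, Finset.sum_range_zero, hC, h1, h2]
            norm_num
          · have h2 : c2 = 0 := hz3 (by omega)
            simp only [Finset.sum_range_succ, Finset.sum_range_zero, hC, h2]
            norm_num
          · simp only [Finset.sum_range_succ, Finset.sum_range_zero, hC]
            norm_num
        rw [e1, e2, heq, hsum']
        rw [pow_add]
        ring

/-- Reduction for the GLS expansion: every `α ∈ R` can be written as
`Σ_{i<ℓ} c_i·τ^i + τ^ℓ·β` with GLS digits (among any four consecutive digits at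
least one is zero) and a remainder `β` with `Q(β) ≤ 38`. -/
theorem stmt15 (μ : ℤ) (hμ : μ = 1 ∨ μ = -1) (α : Rg μ) :
    ∃ (ℓ : ℕ) (c : ℕ → ℤ) (β : Rg μ),
      (∀ i < ℓ, -3 ≤ c i ∧ c i ≤ 3) ∧
      (∀ i, i + 3 < ℓ → c i = 0 ∨ c (i + 1) = 0 ∨ c (i + 2) = 0 ∨ c (i + 3) = 0) ∧
      Q μ β ≤ 38 ∧
      α = (∑ i ∈ Finset.range ℓ, (c i : Rg μ) * tau μ ^ i) + tau μ ^ ℓ * β := by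
  have hle : Q μ α ≤ (⌈Q μ α⌉₊ : ℝ) + 38 := by
    have := Nat.le_ceil (Q μ α)
    linarith
  exact descent μ hμ ⌈Q μ α⌉₊ α hle
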